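/- With ψ_i defined by ψ_0 = (w ∧ x) ∨ (x ∧ y) ∨ (y ∧ z) and ψ_{i+1} = (u_i ∧ ψ_i) ∨ (u_i ∧ v_i) ∨ (v_i ∧ ψ'_i) (with u_i, v_i fresh and ψ'_i a variable-disjoint copy of ψ_i), the decision-tree depth satisfies D(ψ_{i+1}) ≤ 2 + max(D(ψ_i), D(ψ'_i)) ; consequently D(ψ_i) ≤ 2i + 3 = O(log of the number of variables of ψ_i). -/
import Mathlib


/-- A decision tree: internal nodes query a variable and branch on its Boolean
value; leaves output a Boolean. -/
inductive DTree (ι : Type) where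
  | leaf : Bool → DTree ι
  | node : ι → DTree ι → DTree ι → DTree ι

namespace DTree

variable {ι : Type}

/-- Evaluate a decision tree on an assignment. -/
def eval : DTree ι → (ι → Bool) → Bool
  | .leaf b, _ => b
  | .node i t f, v => if v i then t.eval v else f.eval v

/-- Depth: maximal number of queries on a root-to-leaf path. -/
def depth : DTree ι → ℕ
  | .leaf _ => 0
  | .node _ t f => 1 + max t.depth f.depth

/-- A tree computes a Boolean function if it agrees with it on all inputs. -/
def Computes (T : DTree ι) (f : (ι → Bool) → Bool) : Prop :=
  ∀ v, T.eval v = f v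

end DTree

/-- Decision-tree depth of a Boolean function: minimum depth over all decision
trees computing it. -/
noncomputable def Ddepth {ι : Type} (f : (ι → Bool) → Bool) : ℕ :=
  sInf {d | ∃ T : DTree ι, T.Computes f ∧ T.depth = d}

/-- Boolean formulas over constants, variables, negation, conjunction,
disjunction. -/
inductive BForm (ι : Type) where
  | const : Bool → BForm ι
  | var : ι → BForm ι
  | not : BForm ι → BForm ι
  | and : BForm ι → BForm ι → BForm ι
  | or : BForm ι → BForm ι → BForm ι

namespace BForm

variable {ι : Type}

/-- Evaluate a formula on an assignment. -/
def eval : BForm ι → (ι → Bool) → Bool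
  | .const b, _ => b
  | .var i, v => v i
  | .not φ, v => !(φ.eval v)
  | .and φ ψ, v => φ.eval v && ψ.eval v
  | .or φ ψ, v => φ.eval v || ψ.eval v

/-- The list of variable occurrences of a formula. -/
def varList : BForm ι → List ι
  | .const _ => []
  | .var i => [i]
  | .not φ => φ.varList
  | .and φ ψ => φ.varList ++ ψ.varList
  | .or φ ψ => φ.varList ++ ψ.varList

/-- Read-once: every variable occurs at most once. -/
def ReadOnce (φ : BForm ι) : Prop := φ.varList.Nodup

/-- Whether the formula contains an occurrence of a Boolean constant. -/
def HasConst : BForm ι → Prop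
  | .const _ => True
  | .var _ => False
  | .not φ => φ.HasConst
  | .and φ ψ => φ.HasConst ∨ ψ.HasConst
  | .or φ ψ => φ.HasConst ∨ ψ.HasConst

end BForm

/-- Shift all variables of a formula over `ℕ` up by `k` (used to create a
variable-disjoint copy). -/
def BForm.shift (k : ℕ) : BForm ℕ → BForm ℕ
  | .const b => .const b
  | .var i => .var (i + k)
  | .not φ => .not (φ.shift k)
  | .and φ ψ => .and (φ.shift k) (ψ.shift k)
  | .or φ ψ => .or (φ.shift k) (ψ.shift k)

/-- `nv i` is the number of variables of `ψᵢ`: `nv 0 = 4`,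
`nv (i+1) = 2 * nv i + 2`. -/
def nv : ℕ → ℕ
  | 0 => 4
  | i + 1 => 2 * nv i + 2

/-- The family `ψᵢ` : `ψ₀ = (w ∧ x) ∨ (x ∧ y) ∨ (y ∧ z)` on variables
`0,1,2,3`, and `ψᵢ₊₁ = (uᵢ ∧ ψᵢ) ∨ (uᵢ ∧ vᵢ) ∨ (vᵢ ∧ ψ'ᵢ)` where `ψ'ᵢ` is a
fresh copy of `ψᵢ` (shifted by `nv i`) and `uᵢ, vᵢ` are the fresh variables
`2 * nv i` and `2 * nv i + 1`. -/
def psiFam : ℕ → BForm ℕ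
  | 0 =>
      .or (.or (.and (.var 0) (.var 1)) (.and (.var 1) (.var 2)))
        (.and (.var 2) (.var 3))
  | i + 1 =>
      .or
        (.or (.and (.var (2 * nv i)) (psiFam i))
          (.and (.var (2 * nv i)) (.var (2 * nv i + 1))))
        (.and (.var (2 * nv i + 1)) ((psiFam i).shift (nv i)))

section Aux

variable {ι ι' : Type}

/-- Graft: replace every leaf `b` of a tree by `g b`. -/
def DTree.graft : DTree ι → (Bool → DTree ι) → DTree ι
  | .leaf b, g => g b
  | .node i t f, g => .node i (t.graft g) (f.graft g)

lemma DTree.eval_graft (T : DTree ι) (g : Bool → DTree ι) (v : ι → Bool) :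
    (T.graft g).eval v = (g (T.eval v)).eval v := by
  induction T with
  | leaf b => rfl
  | node i t f iht ihf =>
      simp only [graft, eval]
      by_cases h : v i <;> simp [h, iht, ihf]

/-- A tree computing a formula (existence). -/
def BForm.toTree : BForm ι → DTree ι
  | .const b => .leaf b
  | .var i => .node i (.leaf true) (.leaf false)
  | .not φ => φ.toTree.graft (fun b => .leaf (!b))
  | .and φ ψ => φ.toTree.graft (fun b => if b then ψ.toTree else .leaf false)
  | .or φ ψ => φ.toTree.graft (fun b => if b then .leaf true else ψ.toTree)

lemma BForm.toTree_computes (φ : BForm ι) : φ.toTree.Computes φ.eval := by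
  induction φ with
  | const b => intro v; rfl
  | var i =>
      intro v
      simp only [toTree, DTree.eval, eval]
      by_cases h : v i <;> simp [h]
  | not φ ih =>
      intro v
      simp [toTree, DTree.eval_graft, ih v, eval, DTree.eval]
  | and φ ψ ihφ ihψ =>
      intro v
      simp only [toTree, DTree.eval_graft, ihφ v, eval]
      cases h : φ.eval v <;> simp [ihψ v, DTree.eval]
  | or φ ψ ihφ ihψ =>
      intro v
      simp only [toTree, DTree.eval_graft, ihφ v, eval]
      cases h : φ.eval v <;> simp [ihψ v, DTree.eval]

lemma Ddepth_nonempty (φ : BForm ι) :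
    {d | ∃ T : DTree ι, T.Computes φ.eval ∧ T.depth = d}.Nonempty :=
  ⟨φ.toTree.depth, φ.toTree, φ.toTree_computes, rfl⟩

lemma Ddepth_le {f : (ι → Bool) → Bool} (T : DTree ι) (h : T.Computes f) :
    Ddepth f ≤ T.depth :=
  Nat.sInf_le ⟨T, h, rfl⟩

lemma Ddepth_exists (φ : BForm ι) :
    ∃ T : DTree ι, T.Computes φ.eval ∧ T.depth = Ddepth φ.eval :=
  Nat.sInf_mem (Ddepth_nonempty φ)

/-- Rename variables of a tree. -/
def DTree.rename (g : ι → ι') : DTree ι → DTree ι'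
  | .leaf b => .leaf b
  | .node i t f => .node (g i) (t.rename g) (f.rename g)

lemma DTree.eval_rename (g : ι → ι') (T : DTree ι) (v : ι' → Bool) :
    (T.rename g).eval v = T.eval (fun i => v (g i)) := by
  induction T with
  | leaf b => rfl
  | node i t f iht ihf => simp [rename, eval, iht, ihf]

lemma DTree.depth_rename (g : ι → ι') (T : DTree ι) :
    (T.rename g).depth = T.depth := by
  induction T with
  | leaf b => rfl
  | node i t f iht ihf => simp [rename, depth, iht, ihf]

lemma BForm.eval_shift (k : ℕ) (φ : BForm ℕ) (v : ℕ → Bool) :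
    (φ.shift k).eval v = φ.eval (fun i => v (i + k)) := by
  induction φ with
  | const b => rfl
  | var i => rfl
  | not φ ih => simp [shift, eval, ih]
  | and φ ψ ihφ ihψ => simp [shift, eval, ihφ, ihψ]
  | or φ ψ ihφ ihψ => simp [shift, eval, ihφ, ihψ]

lemma Ddepth_shift_le (k : ℕ) (φ : BForm ℕ) :
    Ddepth (φ.shift k).eval ≤ Ddepth φ.eval := by
  obtain ⟨T, hT, hd⟩ := Ddepth_exists φ
  refine le_trans (Ddepth_le (T.rename (· + k)) ?_) ?_
  · intro v
    rw [DTree.eval_rename, BForm.eval_shift, hT]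
  · rw [DTree.depth_rename, hd]

end Aux

lemma psiFam_step (i : ℕ) :
    Ddepth (psiFam (i + 1)).eval ≤
      2 + max (Ddepth (psiFam i).eval) (Ddepth ((psiFam i).shift (nv i)).eval) := by
  obtain ⟨T1, hT1, hd1⟩ := Ddepth_exists (psiFam i)
  obtain ⟨T2, hT2, hd2⟩ := Ddepth_exists ((psiFam i).shift (nv i))
  set u := 2 * nv i
  set T : DTree ℕ :=
    .node u (.node (u + 1) (.leaf true) T1) (.node (u + 1) T2 (.leaf false)) with hT
  refine le_trans (Ddepth_le T ?_) ?_
  · intro v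
    have h1 := hT1 v
    have h2 := hT2 v
    simp only [hT, DTree.eval, psiFam, BForm.eval]
    cases hu : v u <;> cases hv : v (u + 1) <;> simp [hu, hv, h1, h2]
  · simp only [hT, DTree.depth]
    omega

theorem psiFam_base : Ddepth (psiFam 0).eval ≤ 3 := by
  set T : DTree ℕ :=
    .node 1 (.node 0 (.leaf true) (.node 2 (.leaf true) (.leaf false)))
      (.node 2 (.node 3 (.leaf true) (.leaf false)) (.leaf false)) with hT
  refine le_trans (Ddepth_le T ?_) ?_
  · intro v
    simp only [hT, DTree.eval, psiFam, BForm.eval]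
    cases h1 : v 1 <;> cases h0 : v 0 <;> cases h2 : v 2 <;> cases h3 : v 3 <;>
      simp [h0, h1, h2, h3]
  · simp only [hT, DTree.depth]
    omega

/-- `D(ψᵢ₊₁) ≤ 2 + max (D(ψᵢ)) (D(ψ'ᵢ))`, and consequently
`D(ψᵢ) ≤ 2 * i + 3`, which is logarithmic in the number of variables of
`ψᵢ`. -/
theorem psiFam_depth :
    (∀ i : ℕ,
        Ddepth (psiFam (i + 1)).eval ≤
          2 + max (Ddepth (psiFam i).eval) (Ddepth ((psiFam i).shift (nv i)).eval)) ∧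
      ∀ i : ℕ, Ddepth (psiFam i).eval ≤ 2 * i + 3 := by
  refine ⟨psiFam_step, ?_⟩
  intro i
  induction i with
  | zero => simpa using psiFam_base
  | succ i ih =>
      calc Ddepth (psiFam (i + 1)).eval
          ≤ 2 + max (Ddepth (psiFam i).eval)
              (Ddepth ((psiFam i).shift (nv i)).eval) := psiFam_step i
        _ ≤ 2 + Ddepth (psiFam i).eval := by
            have := Ddepth_shift_le (nv i) (psiFam i)
            omega
        _ ≤ 2 * (i + 1) + 3 := by omega
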